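/- Let n be a positive integer and Q1, Q2, Q3 be polynomials in R[x,y,z] such that Q1·x^n + Q2·y^n + Q3·z^n = 0 identically. Then there exist polynomials A, B, C in R[x,y,z] such that Q1 = A·y^n + B·z^n, Q2 = -A·x^n + C·z^n, and Q3 = -B·x^n - C·y^n. -/
import Mathlib


open MvPolynomial

lemma key_coeff (n : ℕ) (Q1 Q2 Q3 : MvPolynomial (Fin 3) ℝ)
    (h : Q1 * (X 0) ^ n + Q2 * (X 1) ^ n + Q3 * (X 2) ^ n = 0)
    (d : Fin 3 →₀ ℕ) (h1 : d 1 < n) (h2 : d 2 < n) : coeff d Q1 = 0 := by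
  have hthis := congrArg (coeff (d + Finsupp.single 0 n)) h
  have c1 : Finsupp.single (0 : Fin 3) n ≤ d + Finsupp.single 0 n := by
    rw [Finsupp.single_le_iff]; simp
  have c2 : ¬ Finsupp.single (1 : Fin 3) n ≤ d + Finsupp.single 0 n := by
    rw [Finsupp.single_le_iff]; simp; omega
  have c3 : ¬ Finsupp.single (2 : Fin 3) n ≤ d + Finsupp.single 0 n := by
    rw [Finsupp.single_le_iff]; simp; omega
  simp only [coeff_add, coeff_zero, X_pow_eq_monomial, coeff_mul_monomial',
    if_pos c1, if_neg c2, if_neg c3] at hthis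
  simpa using hthis

lemma key_coeff2 (n : ℕ) (P Q : MvPolynomial (Fin 3) ℝ)
    (h : P * (X 1) ^ n + Q * (X 2) ^ n = 0)
    (d : Fin 3 →₀ ℕ) (h2 : d 2 < n) : coeff d P = 0 := by
  have hthis := congrArg (coeff (d + Finsupp.single 1 n)) h
  have c1 : Finsupp.single (1 : Fin 3) n ≤ d + Finsupp.single 1 n := by
    rw [Finsupp.single_le_iff]; simp
  have c2 : ¬ Finsupp.single (2 : Fin 3) n ≤ d + Finsupp.single 1 n := by
    rw [Finsupp.single_le_iff]; simp; omega
  simp only [coeff_add, coeff_zero, X_pow_eq_monomial, coeff_mul_monomial',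
    if_pos c1, if_neg c2] at hthis
  simpa using hthis

theorem stmt_0 (n : ℕ) (hn : 0 < n) (Q1 Q2 Q3 : MvPolynomial (Fin 3) ℝ)
    (h : Q1 * (X 0) ^ n + Q2 * (X 1) ^ n + Q3 * (X 2) ^ n = 0) :
    ∃ A B C : MvPolynomial (Fin 3) ℝ,
      Q1 = A * (X 1) ^ n + B * (X 2) ^ n ∧
      Q2 = -A * (X 0) ^ n + C * (X 2) ^ n ∧
      Q3 = -B * (X 0) ^ n - C * (X 1) ^ n := by
  set sy : Fin 3 →₀ ℕ := Finsupp.single 1 n with hsy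
  set sz : Fin 3 →₀ ℕ := Finsupp.single 2 n with hsz
  set A := Q1.divMonomial sy with hA
  set R := Q1.modMonomial sy with hR
  have hQ1 : Q1 = A * (X 1) ^ n + R := by
    rw [X_pow_eq_monomial, mul_comm]
    exact (divMonomial_add_modMonomial Q1 sy).symm
  -- R is divisible by z^n
  have hRmod : R.modMonomial sz = 0 := by
    ext d
    rw [coeff_zero]
    by_cases h2 : sz ≤ d
    · exact coeff_modMonomial_of_le _ h2
    · rw [coeff_modMonomial_of_not_le _ h2]
      by_cases h1 : sy ≤ d
      · exact coeff_modMonomial_of_le _ h1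
      · rw [coeff_modMonomial_of_not_le _ h1]
        rw [hsy, Finsupp.single_le_iff, not_le] at h1
        rw [hsz, Finsupp.single_le_iff, not_le] at h2
        exact key_coeff n Q1 Q2 Q3 h d h1 h2
  set B := R.divMonomial sz with hB
  have hRB : R = B * (X 2) ^ n := by
    rw [X_pow_eq_monomial, mul_comm]
    conv_lhs => rw [← divMonomial_add_modMonomial R sz, hRmod, add_zero]
  have hQ1' : Q1 = A * (X 1) ^ n + B * (X 2) ^ n := by rw [hQ1, hRB]
  -- now the relation
  have hrel : (Q2 + A * (X 0) ^ n) * (X 1) ^ n + (Q3 + B * (X 0) ^ n) * (X 2) ^ n = 0 := by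
    linear_combination h - (X 0 : MvPolynomial (Fin 3) ℝ) ^ n * hQ1'
  set Q2' := Q2 + A * (X 0) ^ n with hQ2'
  set Q3' := Q3 + B * (X 0) ^ n with hQ3'
  have hQ2mod : Q2'.modMonomial sz = 0 := by
    ext d
    rw [coeff_zero]
    by_cases h2 : sz ≤ d
    · exact coeff_modMonomial_of_le _ h2
    · rw [coeff_modMonomial_of_not_le _ h2]
      rw [hsz, Finsupp.single_le_iff, not_le] at h2
      exact key_coeff2 n Q2' Q3' hrel d h2
  set C := Q2'.divMonomial sz with hC
  have hQ2C : Q2' = C * (X 2) ^ n := by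
    rw [X_pow_eq_monomial, mul_comm]
    conv_lhs => rw [← divMonomial_add_modMonomial Q2' sz, hQ2mod, add_zero]
  have hzne : ((X 2 : MvPolynomial (Fin 3) ℝ) ^ n) ≠ 0 := pow_ne_zero _ (X_ne_zero 2)
  have hQ3C : Q3' + C * (X 1) ^ n = 0 := by
    have hmul : (Q3' + C * (X 1) ^ n) * (X 2) ^ n = 0 := by
      linear_combination hrel - (X 1 : MvPolynomial (Fin 3) ℝ) ^ n * hQ2C
    rcases mul_eq_zero.mp hmul with h0 | h0
    · exact h0
    · exact absurd h0 hzne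
  exact ⟨A, B, C, hQ1', by linear_combination hQ2C, by linear_combination hQ3C⟩
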